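/- A subshift X ⊆ Σ^ℤ admits a presentation with property g — that is, there exists a subshift X̃ topologically conjugate to X such that X̃ has property g — if and only if X has property RI. -/

import Mathlib

open Set Filter Topology

/-! Basic symbolic dynamics notions.

* The alphabet is a nonempty finite type `A` with the discrete topology; `A^ℤ` and `A^ℕ`
  carry the product topology.
* A left-infinite sequence `x⁻ = (x_i)_{i ≤ 0}` is encoded as `u : ℕ → A` with `u n = x (-n)`.
* Finite words are lists, read left to right.
-/

/-- The shift `S`. -/
def shiftMap {A : Type*} (x : ℤ → A) : ℤ → A := fun i => x (i + 1)

/-- A subshift: a nonempty closed shift-invariant subset of `A^ℤ`. -/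
def IsSubshift {A : Type*} [TopologicalSpace A] (X : Set (ℤ → A)) : Prop :=
  X.Nonempty ∧ IsClosed X ∧ shiftMap '' X = X

/-- `X⁻`: the left-infinite rays of points of `X` (encoded via `u n = x (-n)`). -/
def Xminus {A : Type*} (X : Set (ℤ → A)) : Set (ℕ → A) :=
  {u | ∃ x ∈ X, ∀ n : ℕ, u n = x (-(n : ℤ))}

/-- The word `w` occurs in `x` (as a block of consecutive coordinates). -/
def Occurs {A : Type*} (w : List A) (x : ℤ → A) : Prop :=
  ∃ i : ℤ, ∀ j : Fin w.length, x (i + ((j : ℕ) : ℤ)) = w.get j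

/-- A finite word is admissible for `X` if it occurs in some point of `X`. -/
def Admissible {A : Type*} (X : Set (ℤ → A)) (w : List A) : Prop :=
  ∃ x ∈ X, Occurs w x

/-- The left ray `u` ends in the word `w`, i.e. `(x_{-k},…,x_0) = w` where `|w| = k+1`. -/
def EndsIn {A : Type*} (u : ℕ → A) (w : List A) : Prop :=
  ∀ j : Fin w.length, u (w.length - 1 - (j : ℕ)) = w.get j

/-- `Γ₁⁺(x⁻)`: the letters that can follow the left ray `u` in `X`. -/
def Gamma1 {A : Type*} (X : Set (ℤ → A)) (u : ℕ → A) : Set A :=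
  {σ | ∃ x ∈ X, (∀ n : ℕ, x (-(n : ℤ)) = u n) ∧ x 1 = σ}

/-- `x` carries the word `b` on the coordinate interval `[-(|b| - 1), 0]`. -/
def EndsAtZero {A : Type*} (x : ℤ → A) (b : List A) : Prop :=
  ∀ j : Fin b.length, x (((j : ℕ) : ℤ) - ((b.length : ℤ) - 1)) = b.get j

/-- `c ∈ ω⁺(b)`: every point of `X` carrying `b` ending at coordinate `0` can be modified
on the positive coordinates so as to continue with the word `c`. -/
def OmegaWord {A : Type*} (X : Set (ℤ → A)) (b c : List A) : Prop :=
  ∀ x ∈ X, EndsAtZero x b →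
    ∃ x' ∈ X, (∀ i : ℤ, i ≤ 0 → x' i = x i) ∧
      ∀ j : Fin c.length, x' (((j : ℕ) : ℤ) + 1) = c.get j

/-- `ω₁⁺(b)`. -/
def omega1 {A : Type*} (X : Set (ℤ → A)) (b : List A) : Set A :=
  {σ | OmegaWord X b [σ]}

/-- The word `(x_{-n},…,x_0)` read off the left ray `u`. -/
def lastWord {A : Type*} (u : ℕ → A) (n : ℕ) : List A :=
  List.ofFn fun j : Fin (n + 1) => u (n - (j : ℕ))

/-- `Δ₁⁺(x⁻) = ⋃ₙ ω₁⁺((x_{-n},…,x_0))`. -/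
def Delta1 {A : Type*} (X : Set (ℤ → A)) (u : ℕ → A) : Set A :=
  ⋃ n : ℕ, omega1 X (lastWord u n)

/-- Property g: `Δ₁⁺(x⁻) ≠ ∅` for every `x⁻ ∈ X⁻`. -/
def PropertyG {A : Type*} (X : Set (ℤ → A)) : Prop :=
  ∀ u ∈ Xminus X, (Delta1 X u).Nonempty

/-- A g-function for `X`, encoded as a total function `g : (ℕ → A) → A → ℝ`:
continuity (of the restriction to the graph of `Γ₁⁺`, i.e. of the map on
`{(x⁻,σ) : σ ∈ Γ₁⁺(x⁻)}`), values in `[0,1]` there, and the normalization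
`∑_{σ ∈ Γ₁⁺(x⁻)} g (x⁻, σ) = 1`. -/
def IsGFunction {A : Type*} [Fintype A] [TopologicalSpace A] (X : Set (ℤ → A))
    (g : (ℕ → A) → A → ℝ) : Prop :=
  ContinuousOn (fun p : (ℕ → A) × A => g p.1 p.2)
      {p : (ℕ → A) × A | p.1 ∈ Xminus X ∧ p.2 ∈ Gamma1 X p.1} ∧
  (∀ u ∈ Xminus X, ∀ σ ∈ Gamma1 X u, g u σ ∈ Set.Icc (0 : ℝ) 1) ∧
  (∀ u ∈ Xminus X, ∑ σ : A, (Gamma1 X u).indicator (g u) σ = 1)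

/-- Property (D): for every admissible word `b` and letter `σ` with `bσ` admissible there
is a word `a` with `ab` admissible and `σ ∈ ω₁⁺(ab)`. -/
def PropertyD {A : Type*} (X : Set (ℤ → A)) : Prop :=
  ∀ (b : List A) (σ : A), b ≠ [] → Admissible X (b ++ [σ]) →
    ∃ a : List A, a ≠ [] ∧ Admissible X (a ++ b) ∧ σ ∈ omega1 X (a ++ b)

/-- Topological conjugacy: a homeomorphism between the subshifts commuting with the
shifts. -/
def Conjugate {A B : Type*} [TopologicalSpace A] [TopologicalSpace B]
    (X : Set (ℤ → A)) (Y : Set (ℤ → B)) : Prop :=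
  ∃ φ : X ≃ₜ Y, ∀ (x : X) (hx : shiftMap x.1 ∈ X),
    (φ ⟨shiftMap x.1, hx⟩).1 = shiftMap (φ x).1

/-- `Ψ` is an RI-mapping for `X` with window `[-L, L]`, i.e. it satisfies conditions
(RIa) and (RIb).  Blocks `(x_{-L},…,x_L) ∈ X_{[-L,L]}` are encoded as functions
`Fin (2L+1) → A` (index `j` corresponding to coordinate `j - L`), words
`(x_1,…,x_{L+1}) ∈ X_{[1,L+1]}` as functions `Fin (L+1) → A`, and blocks of
`X_{[-L-n,L]}` as functions `Fin (2L+n+1) → A` (index `j` corresponding to coordinate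
`j - L - n`). -/
def IsRIMap {A : Type*} (X : Set (ℤ → A)) (L : ℕ)
    (Ψ : (Fin (2 * L + 1) → A) → (Fin (L + 1) → A)) : Prop :=
  (∀ x ∈ X, ∃ x' ∈ X, (∀ i : ℤ, i ≤ 0 → x' i = x i) ∧
      ∀ j : Fin (L + 1),
        x' (((j : ℕ) : ℤ) + 1) =
          Ψ (fun i : Fin (2 * L + 1) => x (((i : ℕ) : ℤ) - (L : ℤ))) j) ∧
  (∀ n : ℕ, n < L → ∀ b : Fin (2 * L + n + 1) → A,
      (∃ x ∈ X, ∀ j : Fin (2 * L + n + 1), x (((j : ℕ) : ℤ) - (L : ℤ) - (n : ℤ)) = b j) →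
      Ψ (fun j : Fin (2 * L + 1) =>
            if h : (j : ℕ) ≤ L + n then b ⟨(j : ℕ), by have := j.isLt; omega⟩
            else
              Ψ (fun i : Fin (2 * L + 1) => b ⟨n + (i : ℕ), by have := i.isLt; omega⟩)
                ⟨(j : ℕ) - (L + n) - 1, by have := j.isLt; omega⟩) =
        Ψ (fun j : Fin (2 * L + 1) => b ⟨(j : ℕ), by have := j.isLt; omega⟩))

/-- Property RI: `X` has an RI-mapping for some window size `L`. -/
def PropertyRI {A : Type*} (X : Set (ℤ → A)) : Prop :=
  ∃ (L : ℕ) (Ψ : (Fin (2 * L + 1) → A) → (Fin (L + 1) → A)), IsRIMap X L Ψ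

/-- translation by `k`. -/
def Tr {A : Type*} (k : ℤ) (x : ℤ → A) : ℤ → A := fun i => x (i + k)

lemma Tr_Tr {A : Type*} (k l : ℤ) (x : ℤ → A) : Tr k (Tr l x) = Tr (k + l) x := by
  funext i; simp [Tr, add_assoc]

lemma Tr_zero {A : Type*} (x : ℤ → A) : Tr 0 x = x := by funext i; simp [Tr]

lemma shiftMap_eq_Tr {A : Type*} (x : ℤ → A) : shiftMap x = Tr 1 x := rfl

lemma Tr_mem {A : Type*} [TopologicalSpace A] {X : Set (ℤ → A)} (hX : IsSubshift X)
    (k : ℤ) {x : ℤ → A} (hx : x ∈ X) : Tr k x ∈ X := by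
  induction k using Int.induction_on with
  | zero => rwa [Tr_zero]
  | succ n ih =>
    have h1 : shiftMap (Tr n x) ∈ X := by
      rw [← hX.2.2]; exact mem_image_of_mem _ ih
    have : shiftMap (Tr (n : ℤ) x) = Tr ((n : ℤ) + 1) x := by
      funext i; simp only [shiftMap, Tr]; congr 1; ring
    rwa [this] at h1
  | pred n ih =>
    have h2 : Tr (-(n : ℤ)) x ∈ shiftMap '' X := by rw [hX.2.2]; exact ih
    obtain ⟨z, hz, hzx⟩ := h2
    have : z = Tr (-(n : ℤ) - 1) x := by
      funext i
      have : z i = shiftMap z (i - 1) := by simp [shiftMap]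
      rw [this, hzx]; simp [Tr]; ring_nf
    rwa [this] at hz

section
variable {A B : Type*} [TopologicalSpace A] [TopologicalSpace B]
  {X : Set (ℤ → A)} {Y : Set (ℤ → B)}

lemma phi_congr (φ : X ≃ₜ Y) {a b : ℤ → A} (ha : a ∈ X) (hb : b ∈ X) (hab : a = b) :
    (φ ⟨a, ha⟩).1 = (φ ⟨b, hb⟩).1 := by subst hab; rfl

lemma phi_Tr (hX : IsSubshift X) (φ : X ≃ₜ Y)
    (hφ : ∀ (x : X) (hx : shiftMap x.1 ∈ X), (φ ⟨shiftMap x.1, hx⟩).1 = shiftMap (φ x).1)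
    (k : ℤ) (x : X) (h : Tr k x.1 ∈ X) : (φ ⟨Tr k x.1, h⟩).1 = Tr k (φ x).1 := by
  induction k using Int.induction_on with
  | zero =>
    rw [phi_congr φ h x.2 (Tr_zero x.1), Tr_zero]
  | succ n ih =>
    have hmem : Tr (n : ℤ) x.1 ∈ X := Tr_mem hX _ x.2
    have hs : shiftMap (Tr (n : ℤ) x.1) = Tr ((n : ℤ) + 1) x.1 := by
      funext i; simp only [shiftMap, Tr]; congr 1; ring
    have h2 := hφ ⟨Tr (n : ℤ) x.1, hmem⟩ (by rw [hs]; exact h)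
    rw [phi_congr φ _ h hs] at h2
    rw [h2, ih hmem]
    funext i; simp only [shiftMap, Tr]; congr 1; ring
  | pred n ih =>
    have hmem2 : Tr (-(n : ℤ)) x.1 ∈ X := Tr_mem hX _ x.2
    have hs : shiftMap (Tr (-(n : ℤ) - 1) x.1) = Tr (-(n : ℤ)) x.1 := by
      funext i; simp only [shiftMap, Tr]; congr 1; ring
    have h2 := hφ ⟨Tr (-(n : ℤ) - 1) x.1, h⟩ (by rw [hs]; exact hmem2)
    rw [phi_congr φ _ hmem2 hs, ih hmem2] at h2
    funext i
    have h5 := congrFun h2.symm (i - 1)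
    simp only [shiftMap] at h5
    have h4 : i - 1 + 1 = i := by ring
    rw [h4] at h5
    rw [h5]; simp only [Tr]; congr 1; ring
end

section
variable {A : Type*} [TopologicalSpace A] [DiscreteTopology A] [Finite A]
  {B : Type*} [TopologicalSpace B] [DiscreteTopology B]

/-- CHL-type uniform locality radius for a continuous map into a discrete space. -/
lemma exists_radius {X : Set (ℤ → A)} (hXc : IsClosed X) (f : X → B) (hf : Continuous f) :
    ∃ r : ℕ, ∀ x x' : X, (∀ j : ℤ, |j| ≤ (r : ℤ) → x.1 j = x'.1 j) → f x = f x' := by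
  haveI : CompactSpace X := isCompact_iff_compactSpace.mp hXc.isCompact
  set K : Set (X × X) := {p | f p.1 ≠ f p.2} with hK
  have hKclosed : IsClosed K := by
    have : K = (fun p : X × X => (f p.1, f p.2)) ⁻¹' {q : B × B | q.1 ≠ q.2} := rfl
    rw [this]
    exact (isClosed_discrete _).preimage ((hf.comp continuous_fst).prodMk (hf.comp continuous_snd))
  have hKcomp : IsCompact K := hKclosed.isCompact
  set V : ℕ → Set (X × X) := fun n => {p | ∃ j : ℤ, |j| ≤ (n : ℤ) ∧ p.1.1 j ≠ p.2.1 j} with hV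
  have hVopen : ∀ n, IsOpen (V n) := by
    intro n
    have : V n = ⋃ j ∈ Finset.Icc (-(n : ℤ)) (n : ℤ), {p : X × X | p.1.1 j ≠ p.2.1 j} := by
      ext p
      simp only [hV, mem_setOf_eq, mem_iUnion, Finset.mem_Icc, exists_prop]
      constructor
      · rintro ⟨j, hj, hne⟩; exact ⟨j, abs_le.mp hj, hne⟩
      · rintro ⟨j, hj, hne⟩; exact ⟨j, abs_le.mpr hj, hne⟩
    rw [this]
    refine isOpen_biUnion fun j _ => ?_
    have : {p : X × X | p.1.1 j ≠ p.2.1 j}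
        = (fun p : X × X => (p.1.1 j, p.2.1 j)) ⁻¹' {q : A × A | q.1 ≠ q.2} := rfl
    rw [this]
    exact (isOpen_discrete _).preimage
      (((continuous_apply j).comp (continuous_subtype_val.comp continuous_fst)).prodMk
        ((continuous_apply j).comp (continuous_subtype_val.comp continuous_snd)))
  have hcover : K ⊆ ⋃ n : ℕ, V n := by
    intro p hp
    by_cases hall : ∀ j : ℤ, p.1.1 j = p.2.1 j
    · exact absurd (congrArg f (Subtype.ext (funext hall))) hp
    · push_neg at hall
      obtain ⟨j, hj⟩ := hall
      exact mem_iUnion.mpr ⟨j.natAbs, ⟨j, by rw [Int.abs_eq_natAbs], hj⟩⟩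
  obtain ⟨t, ht⟩ := hKcomp.elim_finite_subcover V hVopen hcover
  refine ⟨t.sup id, fun x x' hagree => ?_⟩
  by_contra hne
  have hmem : (x, x') ∈ K := hne
  obtain ⟨n, hn, hVn⟩ := by
    have := ht hmem
    simpa only [mem_iUnion, exists_prop] using this
  obtain ⟨j, hj, hjne⟩ := hVn
  exact hjne (hagree j (le_trans hj (by exact_mod_cast Finset.le_sup (f := id) hn)))
end

section
variable {B : Type*}

lemma endsAtZero_ofFn_iff {n : ℕ} (y : ℤ → B) (f : Fin (n + 1) → B) :
    EndsAtZero y (List.ofFn f) ↔ ∀ j : Fin (n + 1), y ((j : ℤ) - n) = f j := by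
  unfold EndsAtZero
  constructor
  · intro h j
    have h2 := h (Fin.cast (List.length_ofFn (f := f)).symm j)
    rw [List.get_ofFn] at h2
    simp only [Fin.cast_cast, Fin.cast_eq_self, Fin.coe_cast] at h2
    convert h2 using 3
    push_cast [List.length_ofFn]; ring
  · intro h j
    rw [List.get_ofFn]
    have h2 := h (Fin.cast (List.length_ofFn (f := f)) j)
    convert h2 using 3
    rfl
    push_cast [List.length_ofFn]; ring
end

section
variable {B : Type*}

lemma endsAtZero_lastWord_iff (y : ℤ → B) (u : ℕ → B) (n : ℕ) :
    EndsAtZero y (lastWord u n) ↔ ∀ k : ℕ, k ≤ n → y (-(k : ℤ)) = u k := by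
  rw [lastWord, endsAtZero_ofFn_iff]
  constructor
  · intro h k hk
    have h2 := h ⟨n - k, by omega⟩
    have e1 : (((⟨n - k, by omega⟩ : Fin (n + 1)) : ℕ) : ℤ) - (n : ℤ) = -(k : ℤ) := by
      simp only []; omega
    have e2 : n - ((⟨n - k, by omega⟩ : Fin (n + 1)) : ℕ) = k := by simp only []; omega
    rw [e1, e2] at h2; exact h2
  · intro h j
    have h2 := h (n - (j : ℕ)) (by omega)
    have e1 : -(((n - (j : ℕ) : ℕ)) : ℤ) = (j : ℤ) - n := by have := j.isLt; omega
    rw [← e1]; exact h2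

lemma omega1_lastWord_mono (Y : Set (ℤ → B)) (u : ℕ → B) {m n : ℕ} (h : m ≤ n) :
    omega1 Y (lastWord u m) ⊆ omega1 Y (lastWord u n) := by
  intro σ hσ x hx hends
  exact hσ x hx ((endsAtZero_lastWord_iff x u m).mpr fun k hk =>
    (endsAtZero_lastWord_iff x u n).mp hends k (le_trans hk h))
end

lemma exists_N {B : Type*} [Fintype B] [TopologicalSpace B] [DiscreteTopology B]
    {Y : Set (ℤ → B)} (hY : IsSubshift Y) (hg : PropertyG Y) :
    ∃ N : ℕ, ∀ u ∈ Xminus Y, (omega1 Y (lastWord u N)).Nonempty := by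
  have hYcomp : IsCompact Y := hY.2.1.isCompact
  have hKcomp : IsCompact (Xminus Y) := by
    have he : Xminus Y = (fun y : ℤ → B => fun n : ℕ => y (-(n : ℤ))) '' Y := by
      ext u
      constructor
      · rintro ⟨x, hx, hux⟩; exact ⟨x, hx, by funext n; exact (hux n).symm⟩
      · rintro ⟨x, hx, rfl⟩; exact ⟨x, hx, fun n => rfl⟩
    rw [he]; exact hYcomp.image (continuous_pi fun n => continuous_apply _)
  set U : ℕ → Set (ℕ → B) := fun n => {u | (omega1 Y (lastWord u n)).Nonempty} with hU
  have hUopen : ∀ n, IsOpen (U n) := by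
    intro n
    have he : U n = (fun u : ℕ → B => fun j : Fin (n + 1) => u (j : ℕ)) ⁻¹'
        {v : Fin (n + 1) → B |
          (omega1 Y (List.ofFn fun j : Fin (n + 1) => v ⟨n - (j : ℕ), by omega⟩)).Nonempty} := rfl
    rw [he]
    exact (isOpen_discrete _).preimage (continuous_pi fun j => continuous_apply _)
  have hcover : Xminus Y ⊆ ⋃ n, U n := by
    intro u hu
    obtain ⟨σ, hσ⟩ := hg u hu
    rw [Delta1, mem_iUnion] at hσ
    obtain ⟨n, hn⟩ := hσ
    exact mem_iUnion.mpr ⟨n, σ, hn⟩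
  obtain ⟨t, ht⟩ := hKcomp.elim_finite_subcover U hUopen hcover
  refine ⟨t.sup id, fun u hu => ?_⟩
  have hm := ht hu
  simp only [mem_iUnion, exists_prop] at hm
  obtain ⟨n, hn, σ, hσ⟩ := hm
  exact ⟨σ, omega1_lastWord_mono Y u (by exact_mod_cast Finset.le_sup (f := id) hn) hσ⟩

attribute [local instance] Classical.propDecidable

noncomputable def nextL {B : Type*} (Y : Set (ℤ → B)) {N : ℕ} (d : B)
    (w : Fin (N + 1) → B) : B :=
  if h : (omega1 Y (List.ofFn w)).Nonempty then h.choose else d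

noncomputable def pushW {B : Type*} (Y : Set (ℤ → B)) {N : ℕ} (d : B)
    (w : Fin (N + 1) → B) : Fin (N + 1) → B :=
  fun k => if h : (k : ℕ) < N then w ⟨(k : ℕ) + 1, by omega⟩ else nextL Y d w

noncomputable def Wseq {B : Type*} (Y : Set (ℤ → B)) {N : ℕ} (d : B)
    (v : Fin (N + 1) → B) : ℕ → (Fin (N + 1) → B)
  | 0 => v
  | J + 1 => pushW Y d (Wseq Y d v J)

lemma nextL_mem {B : Type*} {Y : Set (ℤ → B)} {N : ℕ} (d : B) {w : Fin (N + 1) → B}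
    (h : (omega1 Y (List.ofFn w)).Nonempty) : nextL Y d w ∈ omega1 Y (List.ofFn w) := by
  rw [nextL, dif_pos h]; exact h.choose_spec

lemma contLem {B : Type*} [TopologicalSpace B] {Y : Set (ℤ → B)} (hY : IsSubshift Y) {N : ℕ}
    (hN : ∀ u ∈ Xminus Y, (omega1 Y (lastWord u N)).Nonempty) (d : B) :
    ∀ (J : ℕ), ∀ y ∈ Y, ∃ y' ∈ Y, (∀ i : ℤ, i ≤ 0 → y' i = y i) ∧
      (∀ j : ℕ, j < J →
        y' ((j : ℤ) + 1) = nextL Y d (Wseq Y d (fun k : Fin (N + 1) => y ((k : ℤ) - N)) j)) ∧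
      (∀ k : Fin (N + 1),
        y' ((k : ℤ) + (J : ℤ) - N) = Wseq Y d (fun k : Fin (N + 1) => y ((k : ℤ) - N)) J k) := by
  intro J
  induction J with
  | zero =>
    intro y hy
    refine ⟨y, hy, fun i _ => rfl, fun j h => absurd h (by omega), fun k => ?_⟩
    have e : (k : ℤ) + (0:ℤ) - N = (k : ℤ) - N := by ring
    show y ((k : ℤ) + (0:ℤ) - N) = y ((k : ℤ) - N)
    rw [e]
  | succ J ihJ =>
    intro y hy
    obtain ⟨y', hy', hle, hmid, hwin⟩ := ihJ y hy
    set v := fun k : Fin (N + 1) => y ((k : ℤ) - N) with hv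
    set w := Wseq Y d v J with hw
    have hTy' : Tr (J : ℤ) y' ∈ Y := Tr_mem hY _ hy'
    have hray : (fun t : ℕ => y' ((J : ℤ) - t)) ∈ Xminus Y :=
      ⟨Tr (J : ℤ) y', hTy', fun t => by simp only [Tr]; congr 1; ring⟩
    have hlw : lastWord (fun t : ℕ => y' ((J : ℤ) - t)) N = List.ofFn w := by
      rw [lastWord]
      congr 1; funext j
      rw [← hwin j]
      congr 1
      have := j.isLt; omega
    have hne : (omega1 Y (List.ofFn w)).Nonempty := hlw ▸ hN _ hray
    have hσ := nextL_mem (Y := Y) d hne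
    have hEnds : EndsAtZero (Tr (J : ℤ) y') (List.ofFn w) := by
      rw [endsAtZero_ofFn_iff]
      intro j
      show y' ((j : ℤ) - (N : ℤ) + J) = w j
      rw [← hwin j]; congr 1; ring
    obtain ⟨p, hp, hple, hp1⟩ := hσ (Tr (J : ℤ) y') hTy' hEnds
    have hp1' : p 1 = nextL Y d w := by
      have h0 := hp1 ⟨0, by simp⟩
      simpa using h0
    have hagJ : ∀ i : ℤ, i ≤ J → Tr (-(J : ℤ)) p i = y' i := by
      intro i hi
      show p (i + -(J : ℤ)) = y' i
      rw [hple (i + -(J : ℤ)) (by omega)]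
      show y' (i + -(J : ℤ) + J) = y' i
      congr 1; ring
    refine ⟨Tr (-(J : ℤ)) p, Tr_mem hY _ hp, ?_, ?_, ?_⟩
    · intro i hi; rw [hagJ i (by omega), hle i hi]
    · intro j hj
      rcases Nat.lt_or_ge j J with h1 | h1
      · rw [hagJ _ (by omega)]; exact hmid j h1
      · have hjJ : j = J := by omega
        subst hjJ
        have e : (j : ℤ) + 1 + -(j : ℤ) = 1 := by ring
        show p ((j : ℤ) + 1 + -(j : ℤ)) = _
        rw [e, hp1']
    · intro k
      show Tr (-(J : ℤ)) p ((k : ℤ) + ((J : ℕ) + 1 : ℕ) - N) = pushW Y d w k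
      rcases Nat.lt_or_ge (k : ℕ) N with hk | hk
      · have hco : (k : ℤ) + (((J : ℕ) + 1 : ℕ) : ℤ) - N ≤ (J : ℤ) := by push_cast; omega
        rw [hagJ _ hco]
        have h2 := hwin ⟨(k : ℕ) + 1, by omega⟩
        rw [pushW, dif_pos hk]
        rw [← h2]
        congr 1
        push_cast; ring
      · have hkN : (k : ℕ) = N := by have := k.isLt; omega
        have hco : (k : ℤ) + (((J : ℕ) + 1 : ℕ) : ℤ) - N = (J : ℤ) + 1 := by push_cast; omega
        rw [pushW, dif_neg (by omega)]
        show p ((k : ℤ) + (((J : ℕ) + 1 : ℕ) : ℤ) - N + -(J : ℤ)) = _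
        have e : (k : ℤ) + (((J : ℕ) + 1 : ℕ) : ℤ) - N + -(J : ℤ) = 1 := by push_cast; omega
        rw [e, hp1']

attribute [local instance] Classical.propDecidable

lemma dirB {A : Type*} [Fintype A] [Nonempty A] [TopologicalSpace A] [DiscreteTopology A]
    {X : Set (ℤ → A)} (hX : IsSubshift X) {m : ℕ} {Y : Set (ℤ → Fin m)}
    (hY : IsSubshift Y) (hc : Conjugate X Y) (hg : PropertyG Y) : PropertyRI X := by
  classical
  obtain ⟨φ, hφ⟩ := hc
  obtain ⟨y₀, hy₀⟩ := hY.1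
  obtain ⟨x₀, hx₀⟩ := hX.1
  -- raw conjugacy maps as total functions
  set Φr : (ℤ → A) → (ℤ → Fin m) := fun x => if hx : x ∈ X then (φ ⟨x, hx⟩).1 else y₀
    with hΦrdef
  set Ψr : (ℤ → Fin m) → (ℤ → A) := fun y => if hy : y ∈ Y then (φ.symm ⟨y, hy⟩).1 else x₀
    with hΨrdef
  have hΦmem : ∀ {x : ℤ → A}, x ∈ X → Φr x ∈ Y := by
    intro x hx; simp only [hΦrdef, dif_pos hx]; exact (φ ⟨x, hx⟩).2
  have hΨmem : ∀ {y : ℤ → Fin m}, y ∈ Y → Ψr y ∈ X := by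
    intro y hy; simp only [hΨrdef, dif_pos hy]; exact (φ.symm ⟨y, hy⟩).2
  have hΨΦ : ∀ {x : ℤ → A}, x ∈ X → Ψr (Φr x) = x := by
    intro x hx
    simp only [hΦrdef, hΨrdef, dif_pos hx, dif_pos (φ ⟨x, hx⟩).2]
    have h1 : (⟨(φ ⟨x, hx⟩).1, (φ ⟨x, hx⟩).2⟩ : Y) = φ ⟨x, hx⟩ := rfl
    rw [h1, Homeomorph.symm_apply_apply]
  have hΦΨ : ∀ {y : ℤ → Fin m}, y ∈ Y → Φr (Ψr y) = y := by
    intro y hy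
    simp only [hΦrdef, hΨrdef, dif_pos hy, dif_pos (φ.symm ⟨y, hy⟩).2]
    have h1 : (⟨(φ.symm ⟨y, hy⟩).1, (φ.symm ⟨y, hy⟩).2⟩ : X) = φ.symm ⟨y, hy⟩ := rfl
    rw [h1, Homeomorph.apply_symm_apply]
  have hΦTr : ∀ {x : ℤ → A}, x ∈ X → ∀ k : ℤ, Φr (Tr k x) = Tr k (Φr x) := by
    intro x hx k
    have hmem := Tr_mem hX k hx
    simp only [hΦrdef, dif_pos hx, dif_pos hmem]
    exact phi_Tr hX φ hφ k ⟨x, hx⟩ hmem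
  have hΨTr : ∀ {y : ℤ → Fin m}, y ∈ Y → ∀ k : ℤ, Ψr (Tr k y) = Tr k (Ψr y) := by
    intro y hy k
    have hxy : Ψr y ∈ X := hΨmem hy
    have h1 : Φr (Ψr y) = y := hΦΨ hy
    have h2 : Tr k (Ψr y) ∈ X := Tr_mem hX k hxy
    calc Ψr (Tr k y) = Ψr (Tr k (Φr (Ψr y))) := by rw [h1]
    _ = Ψr (Φr (Tr k (Ψr y))) := by rw [hΦTr hxy k]
    _ = Tr k (Ψr y) := hΨΦ h2
  -- locality radii
  obtain ⟨r1, hr1⟩ := exists_radius (B := Fin m) hX.2.1 (fun x => (φ x).1 0)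
    ((continuous_apply (0 : ℤ)).comp (continuous_subtype_val.comp φ.continuous))
  obtain ⟨r2, hr2⟩ := exists_radius (B := A) hY.2.1 (fun y => (φ.symm y).1 0)
    ((continuous_apply (0 : ℤ)).comp (continuous_subtype_val.comp φ.symm.continuous))
  set r : ℕ := max r1 r2 with hrdef
  have hr1r : (r1 : ℤ) ≤ (r : ℤ) := by exact_mod_cast le_max_left r1 r2
  have hr2r : (r2 : ℤ) ≤ (r : ℤ) := by exact_mod_cast le_max_right r1 r2
  have hΦloc : ∀ x x', x ∈ X → x' ∈ X → ∀ i : ℤ,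
      (∀ j : ℤ, i - r ≤ j → j ≤ i + r → x j = x' j) → Φr x i = Φr x' i := by
    intro x x' hx hx' i hag
    have hm1 := Tr_mem hX i hx
    have hm2 := Tr_mem hX i hx'
    have h1 : Φr (Tr i x) 0 = Φr (Tr i x') 0 := by
      simp only [hΦrdef, dif_pos hm1, dif_pos hm2]
      apply hr1
      intro j hj
      show x (j + i) = x' (j + i)
      rw [abs_le] at hj
      exact hag (j + i) (by omega) (by omega)
    rw [hΦTr hx i, hΦTr hx' i] at h1
    simpa only [Tr, zero_add] using h1
  have hΨloc : ∀ y y', y ∈ Y → y' ∈ Y → ∀ i : ℤ,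
      (∀ j : ℤ, i - r ≤ j → j ≤ i + r → y j = y' j) → Ψr y i = Ψr y' i := by
    intro y y' hy hy' i hag
    have hm1 := Tr_mem hY i hy
    have hm2 := Tr_mem hY i hy'
    have h1 : Ψr (Tr i y) 0 = Ψr (Tr i y') 0 := by
      simp only [hΨrdef, dif_pos hm1, dif_pos hm2]
      apply hr2
      intro j hj
      show y (j + i) = y' (j + i)
      rw [abs_le] at hj
      exact hag (j + i) (by omega) (by omega)
    rw [hΨTr hy i, hΨTr hy' i] at h1
    simpa only [Tr, zero_add] using h1
  -- shifted conjugacy maps: Φh has memory 0 / anticipation 2r, Ψh has memory 2r / anticipation 0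
  set Φh : (ℤ → A) → (ℤ → Fin m) := fun x => Tr (r : ℤ) (Φr x) with hΦhdef
  set Ψh : (ℤ → Fin m) → (ℤ → A) := fun y => Ψr (Tr (-(r : ℤ)) y) with hΨhdef
  have hΦhmem : ∀ {x : ℤ → A}, x ∈ X → Φh x ∈ Y := fun hx => Tr_mem hY _ (hΦmem hx)
  have hΨhmem : ∀ {y : ℤ → Fin m}, y ∈ Y → Ψh y ∈ X := fun hy => hΨmem (Tr_mem hY _ hy)
  have hΨhΦh : ∀ {x : ℤ → A}, x ∈ X → Ψh (Φh x) = x := by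
    intro x hx
    simp only [hΦhdef, hΨhdef]
    rw [Tr_Tr]
    have e : (-(r : ℤ) + r) = 0 := by ring
    rw [e, Tr_zero]
    exact hΨΦ hx
  have hΦhΨh : ∀ {y : ℤ → Fin m}, y ∈ Y → Φh (Ψh y) = y := by
    intro y hy
    simp only [hΦhdef, hΨhdef]
    rw [hΦΨ (Tr_mem hY _ hy), Tr_Tr]
    have e : ((r : ℤ) + -r) = 0 := by ring
    rw [e, Tr_zero]
  have hΦhTr : ∀ {x : ℤ → A}, x ∈ X → ∀ k : ℤ, Φh (Tr k x) = Tr k (Φh x) := by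
    intro x hx k
    simp only [hΦhdef]
    rw [hΦTr hx k, Tr_Tr, Tr_Tr, add_comm]
  have hΦhloc : ∀ x x', x ∈ X → x' ∈ X → ∀ i : ℤ,
      (∀ j : ℤ, i ≤ j → j ≤ i + 2 * r → x j = x' j) → Φh x i = Φh x' i := by
    intro x x' hx hx' i hag
    show Φr x (i + r) = Φr x' (i + r)
    exact hΦloc x x' hx hx' (i + r) (fun j h1 h2 => hag j (by omega) (by omega))
  have hΨhloc : ∀ y y', y ∈ Y → y' ∈ Y → ∀ i : ℤ,
      (∀ j : ℤ, i - 2 * r ≤ j → j ≤ i → y j = y' j) → Ψh y i = Ψh y' i := by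
    intro y y' hy hy' i hag
    simp only [hΨhdef]
    refine hΨloc _ _ (Tr_mem hY _ hy) (Tr_mem hY _ hy') i (fun j h1 h2 => ?_)
    show y (j + -r) = y' (j + -r)
    exact hag (j + -r) (by omega) (by omega)
  -- uniform depth for property g, canonical continuations
  obtain ⟨N, hN⟩ := exists_N hY hg
  set d : Fin m := y₀ 0 with hddef
  have hcont := contLem hY hN d
  choose yc hycY hycle hyccan hycwin using hcont
  set L : ℕ := N + 2 * r with hLdef
  -- the canonical modification map
  set F : (ℤ → A) → (ℤ → A) :=
    fun x => if hx : x ∈ X then Ψh (yc (L + 1) (Φh x) (hΦhmem hx)) else x with hFdef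
  have hFval : ∀ {x : ℤ → A} (hx : x ∈ X), F x = Ψh (yc (L + 1) (Φh x) (hΦhmem hx)) := by
    intro x hx; simp only [hFdef, dif_pos hx]
  have hFmem : ∀ {x : ℤ → A}, x ∈ X → F x ∈ X := by
    intro x hx; rw [hFval hx]; exact hΨhmem (hycY _ _ _)
  have hFle : ∀ {x : ℤ → A}, x ∈ X → ∀ i : ℤ, i ≤ 0 → F x i = x i := by
    intro x hx i hi
    rw [hFval hx]
    have h1 : Ψh (yc (L + 1) (Φh x) (hΦhmem hx)) i = Ψh (Φh x) i := by
      refine hΨhloc _ _ (hycY _ _ _) (hΦhmem hx) i (fun j h1 h2 => ?_)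
      exact hycle _ _ _ j (by omega)
    rw [h1, hΨhΦh hx]
  -- well-definedness: F-values on [1, L+1] depend only on the window [-L, L]
  have hWD : ∀ x x', x ∈ X → x' ∈ X →
      (∀ i : ℤ, -(L : ℤ) ≤ i → i ≤ L → x i = x' i) →
      ∀ j : ℤ, 1 ≤ j → j ≤ (L : ℤ) + 1 → F x j = F x' j := by
    intro x x' hx hx' hag j hj1 hj2
    have hvm : (fun k : Fin (N + 1) => Φh x ((k : ℤ) - N))
        = (fun k : Fin (N + 1) => Φh x' ((k : ℤ) - N)) := by
      funext k
      refine hΦhloc _ _ hx hx' _ (fun t h1 h2 => hag t (by have := k.isLt; omega)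
        (by have := k.isLt; omega))
    have hyag : ∀ i : ℤ, 1 - 2 * (r : ℤ) ≤ i → i ≤ 0 → Φh x i = Φh x' i := by
      intro i h1 h2
      exact hΦhloc _ _ hx hx' i (fun t ht1 ht2 => hag t (by omega) (by omega))
    have hzag : ∀ i : ℤ, j - 2 * (r : ℤ) ≤ i → i ≤ j →
        yc (L + 1) (Φh x) (hΦhmem hx) i = yc (L + 1) (Φh x') (hΦhmem hx') i := by
      intro i h1 h2
      rcases le_or_gt i 0 with h3 | h3
      · rw [hycle _ _ _ i h3, hycle _ _ _ i h3]
        exact hyag i (by omega) h3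
      · obtain ⟨jn, hjn1, hjn2⟩ : ∃ jn : ℕ, (jn : ℤ) + 1 = i ∧ jn < L + 1 :=
          ⟨(i - 1).toNat, by omega, by omega⟩
        rw [← hjn1, hyccan _ _ _ jn hjn2, hyccan _ _ _ jn hjn2, hvm]
    rw [hFval hx, hFval hx']
    exact hΨhloc _ _ (hycY _ _ _) (hycY _ _ _) j (fun t h1 h2 => hzag t (by omega) h2)
  -- consistency of the canonical modification under shifting
  have hKC : ∀ x, x ∈ X → ∀ n : ℕ, ∀ j : ℤ, 1 ≤ j → j ≤ (L : ℤ) + 1 →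
      F (Tr (-(n : ℤ)) (F x)) j = F (Tr (-(n : ℤ)) x) j := by
    intro x hx n j hj1 hj2
    have hFx : F x ∈ X := hFmem hx
    have hx1 : Tr (-(n : ℤ)) (F x) ∈ X := Tr_mem hX _ hFx
    have hx2 : Tr (-(n : ℤ)) x ∈ X := Tr_mem hX _ hx
    have hz : Φh (F x) = yc (L + 1) (Φh x) (hΦhmem hx) := by
      rw [hFval hx]; exact hΦhΨh (hycY _ _ _)
    have e1 : Φh (Tr (-(n : ℤ)) (F x)) = Tr (-(n : ℤ)) (yc (L + 1) (Φh x) (hΦhmem hx)) := by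
      rw [hΦhTr hFx, hz]
    have e2 : Φh (Tr (-(n : ℤ)) x) = Tr (-(n : ℤ)) (Φh x) := hΦhTr hx _
    -- the two shifted points agree on all coordinates ≤ 0, hence have the same input data
    have hag0 : ∀ i : ℤ, i ≤ 0 → Φh (Tr (-(n : ℤ)) (F x)) i = Φh (Tr (-(n : ℤ)) x) i := by
      intro i hi
      rw [e1, e2]
      show yc (L + 1) (Φh x) (hΦhmem hx) (i + -(n : ℤ)) = Φh x (i + -(n : ℤ))
      exact hycle _ _ _ _ (by omega)
    have hvm2 : (fun k : Fin (N + 1) => Φh (Tr (-(n : ℤ)) (F x)) ((k : ℤ) - N))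
        = (fun k : Fin (N + 1) => Φh (Tr (-(n : ℤ)) x) ((k : ℤ) - N)) := by
      funext k
      exact hag0 _ (by have := k.isLt; omega)
    have hzag : ∀ i : ℤ, i ≤ (L : ℤ) + 1 →
        yc (L + 1) (Φh (Tr (-(n : ℤ)) (F x))) (hΦhmem hx1) i
          = yc (L + 1) (Φh (Tr (-(n : ℤ)) x)) (hΦhmem hx2) i := by
      intro i hi
      rcases le_or_gt i 0 with h3 | h3
      · rw [hycle _ _ _ i h3, hycle _ _ _ i h3]
        exact hag0 i h3
      · obtain ⟨jn, hjn1, hjn2⟩ : ∃ jn : ℕ, (jn : ℤ) + 1 = i ∧ jn < L + 1 :=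
          ⟨(i - 1).toNat, by omega, by omega⟩
        rw [← hjn1, hyccan _ _ _ jn hjn2, hyccan _ _ _ jn hjn2, hvm2]
    rw [hFval hx1, hFval hx2]
    exact hΨhloc _ _ (hycY _ _ _) (hycY _ _ _) j (fun t h1 h2 => hzag t (by omega))
  -- the RI map
  set Ψ : (Fin (2 * L + 1) → A) → (Fin (L + 1) → A) := fun w =>
    if h : ∃ x, x ∈ X ∧ ∀ i : Fin (2 * L + 1), x ((i : ℤ) - L) = w i then
      fun j => F (Classical.choose h) ((j : ℤ) + 1)
    else fun _ => Classical.arbitrary A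
    with hΨdef
  have hΨval : ∀ (w : Fin (2 * L + 1) → A) (x : ℤ → A) (hx : x ∈ X),
      (∀ i : Fin (2 * L + 1), x ((i : ℤ) - L) = w i) →
      ∀ j : Fin (L + 1), Ψ w j = F x ((j : ℤ) + 1) := by
    intro w x hx hw j
    have hadm : ∃ x, x ∈ X ∧ ∀ i : Fin (2 * L + 1), x ((i : ℤ) - L) = w i := ⟨x, hx, hw⟩
    simp only [hΨdef]
    rw [dif_pos hadm]
    refine hWD _ _ (Classical.choose_spec hadm).1 hx (fun i hi1 hi2 => ?_) _
      (by omega) (by have := j.isLt; omega)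
    have hlt : (i + L).toNat < 2 * L + 1 := by omega
    have h1 : Classical.choose hadm ((((i + (L : ℤ)).toNat : ℕ) : ℤ) - (L : ℤ))
        = w ⟨(i + (L : ℤ)).toNat, hlt⟩ :=
      (Classical.choose_spec hadm).2 ⟨(i + (L : ℤ)).toNat, hlt⟩
    have h2 : x ((((i + (L : ℤ)).toNat : ℕ) : ℤ) - (L : ℤ)) = w ⟨(i + (L : ℤ)).toNat, hlt⟩ :=
      hw ⟨(i + (L : ℤ)).toNat, hlt⟩
    have hco : (((i + (L : ℤ)).toNat : ℕ) : ℤ) - (L : ℤ) = i := by omega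
    rw [hco] at h1 h2
    rw [h1, ← h2]
  refine ⟨L, Ψ, ?_, ?_⟩
  · -- (RIa)
    intro x hx
    refine ⟨F x, hFmem hx, hFle hx, fun j => ?_⟩
    exact (hΨval (fun i : Fin (2 * L + 1) => x ((i : ℤ) - L)) x hx (fun i => rfl) j).symm
  · -- (RIb)
    intro n hn b hexb
    obtain ⟨x, hx, hxb⟩ := hexb
    funext j
    have hxs : Tr (-(n : ℤ)) x ∈ X := Tr_mem hX _ hx
    have hxts : Tr (-(n : ℤ)) (F x) ∈ X := Tr_mem hX _ (hFmem hx)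
    have hRHS : Ψ (fun i : Fin (2 * L + 1) => b ⟨(i : ℕ), by have := i.isLt; omega⟩) j
        = F (Tr (-(n : ℤ)) x) ((j : ℤ) + 1) := by
      refine hΨval _ _ hxs (fun i => ?_) j
      have h2 := hxb ⟨(i : ℕ), by have := i.isLt; omega⟩
      show x ((i : ℤ) - (L : ℤ) + -(n : ℤ)) = _
      rw [show (i : ℤ) - (L : ℤ) + -(n : ℤ) = (i : ℤ) - (L : ℤ) - (n : ℤ) from by ring]
      exact h2
    have hinner : ∀ k : Fin (2 * L + 1),
        x ((k : ℤ) - L) = b ⟨n + (k : ℕ), by have := k.isLt; omega⟩ := by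
      intro k
      have h2 := hxb ⟨n + (k : ℕ), by have := k.isLt; omega⟩
      have e : ((n + (k : ℕ) : ℕ) : ℤ) - (L : ℤ) - (n : ℤ) = (k : ℤ) - L := by push_cast; ring
      rw [e] at h2
      exact h2
    have hLHS : Ψ (fun i : Fin (2 * L + 1) =>
        if h : (i : ℕ) ≤ L + n then b ⟨(i : ℕ), by have := i.isLt; omega⟩
        else Ψ (fun k : Fin (2 * L + 1) => b ⟨n + (k : ℕ), by have := k.isLt; omega⟩)
          ⟨(i : ℕ) - (L + n) - 1, by have := i.isLt; omega⟩) j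
        = F (Tr (-(n : ℤ)) (F x)) ((j : ℤ) + 1) := by
      refine hΨval _ _ hxts (fun i => ?_) j
      show F x ((i : ℤ) - (L : ℤ) + -(n : ℤ)) = _
      by_cases hcase : (i : ℕ) ≤ L + n
      · rw [dif_pos hcase, hFle hx _ (by have := i.isLt; omega)]
        have h2 := hxb ⟨(i : ℕ), by have := i.isLt; omega⟩
        rw [show (i : ℤ) - (L : ℤ) + -(n : ℤ) = (i : ℤ) - (L : ℤ) - (n : ℤ) from by ring]
        exact h2
      · rw [dif_neg hcase]
        have h4 := hΨval (fun k : Fin (2 * L + 1) => b ⟨n + (k : ℕ), by have := k.isLt; omega⟩)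
          x hx hinner ⟨(i : ℕ) - (L + n) - 1, by have := i.isLt; omega⟩
        rw [h4]
        congr 1
        have := i.isLt
        push_cast
        omega
    exact hLHS.trans ((hKC x hx n ((j : ℤ) + 1) (by omega)
      (by have := j.isLt; omega)).trans hRHS.symm)

set_option maxHeartbeats 1000000 in
lemma dirA {A : Type*} [Fintype A] [Nonempty A] [TopologicalSpace A] [DiscreteTopology A]
    {X : Set (ℤ → A)} (hX : IsSubshift X) (hRI : PropertyRI X) :
    ∃ (m : ℕ) (Y : Set (ℤ → Fin m)), IsSubshift Y ∧ Conjugate X Y ∧ PropertyG Y := by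
  classical
  obtain ⟨L, Ψ, hRIa, hRIb⟩ := hRI
  set B : Type _ := A × (Fin (L + 1) → A) with hBdef
  set m : ℕ := Fintype.card B with hmdef
  set e : B ≃ Fin m := Fintype.equivFin B with hedef
  set code : (ℤ → A) → (ℤ → Fin m) :=
    fun x i => e (x i, Ψ (fun k : Fin (2 * L + 1) => x (i + (k : ℤ) - L))) with hcode
  set dec : (ℤ → Fin m) → (ℤ → A) := fun y i => (e.symm (y i)).1 with hdecdef
  have hdc : ∀ x, dec (code x) = x := by
    intro x; funext i; simp only [hdecdef, hcode, Equiv.symm_apply_apply]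
  have hshift : ∀ x, code (shiftMap x) = shiftMap (code x) := by
    intro x; funext i
    show e (x (i + 1), Ψ (fun k : Fin (2 * L + 1) => x (i + (k : ℤ) - L + 1)))
       = e (x (i + 1 ), Ψ (fun k : Fin (2 * L + 1) => x (i + 1 + (k : ℤ) - L)))
    have h1 : (fun k : Fin (2 * L + 1) => x (i + (k : ℤ) - L + 1))
        = (fun k : Fin (2 * L + 1) => x (i + 1 + (k : ℤ) - L)) := by
      funext k; congr 1; ring
    rw [h1]
  have hcodecont : Continuous code := by
    refine continuous_pi fun i => ?_
    exact (continuous_of_discreteTopology (α := B)).comp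
      ((continuous_apply i).prodMk
        ((continuous_of_discreteTopology (f := Ψ)).comp
          (continuous_pi fun k => continuous_apply (i + (k : ℤ) - L))))
  have hdeccont : Continuous dec :=
    continuous_pi fun i =>
      (continuous_of_discreteTopology (f := fun b : Fin m => (e.symm b).1)).comp
        (continuous_apply i)
  refine ⟨m, code '' X, ⟨?_, ?_, ?_⟩, ?_, ?_⟩
  · exact hX.1.image code
  · exact (hX.2.1.isCompact.image hcodecont).isClosed
  · have h1 : shiftMap '' (code '' X) = code '' (shiftMap '' X) := by
      rw [Set.image_image, Set.image_image]
      exact Set.image_congr fun x _ => (hshift x).symm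
    rw [h1, hX.2.2]
  · -- conjugacy
    refine ⟨Homeomorph.mk
      { toFun := fun x => ⟨code x.1, mem_image_of_mem _ x.2⟩
        invFun := fun y => ⟨dec y.1, by
          obtain ⟨x, hx, hxy⟩ := y.2
          rw [← hxy, hdc]; exact hx⟩
        left_inv := fun x => Subtype.ext (hdc x.1)
        right_inv := fun y => Subtype.ext (by
          obtain ⟨x, hx, hxy⟩ := y.2
          show code (dec y.1) = y.1
          rw [← hxy, hdc]) }
      (Continuous.subtype_mk (hcodecont.comp continuous_subtype_val)
        (fun x => mem_image_of_mem code x.2))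
      (Continuous.subtype_mk (hdeccont.comp continuous_subtype_val)
        (fun y => by
          show dec y.1 ∈ X
          obtain ⟨x, hx, hxy⟩ := y.2
          rw [← hxy, hdc]; exact hx)), ?_⟩
    intro x hx
    exact hshift x.1
  · -- property g
    intro u hu
    set p : ℕ → A := fun n => (e.symm (u n)).1 with hpdef
    set c : Fin (L + 1) → A := (e.symm (u 0)).2 with hcdef
    set v : Fin (2 * L + 1) → A := fun k =>
      if hk : (k : ℕ) < L then p (L - 1 - (k : ℕ))
      else c ⟨(k : ℕ) - L, by have := k.isLt; omega⟩ with hvdef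
    refine ⟨e (c ⟨0, by omega⟩, Ψ v), mem_iUnion.mpr ⟨L, ?_⟩⟩
    show OmegaWord (code '' X) (lastWord u L) [e (c ⟨0, by omega⟩, Ψ v)]
    intro y hy hEnds
    obtain ⟨x, hx, rfl⟩ := hy
    have hE := (endsAtZero_lastWord_iff (code x) u L).mp hEnds
    have hxp : ∀ k : ℕ, k ≤ L → x (-(k : ℤ)) = p k := by
      intro k hk
      have h2 := congrArg (fun b => (e.symm b).1) (hE k hk)
      simpa only [hcode, Equiv.symm_apply_apply, hpdef] using h2
    have hxc : Ψ (fun k : Fin (2 * L + 1) => x (-((0 : ℕ) : ℤ) + (k : ℤ) - L)) = c := by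
      have h2 := congrArg (fun b => (e.symm b).2) (hE 0 (by omega))
      simpa only [hcode, Equiv.symm_apply_apply, hcdef] using h2
    have hxc' : Ψ (fun k : Fin (2 * L + 1) => x ((k : ℤ) - L)) = c := by
      have h1 : (fun k : Fin (2 * L + 1) => x (-((0 : ℕ) : ℤ) + (k : ℤ) - L))
          = (fun k : Fin (2 * L + 1) => x ((k : ℤ) - L)) := by
        funext k; congr 1; push_cast; ring
      rw [← hxc, h1]
    obtain ⟨x', hx', hagree, hval⟩ := hRIa x hx
    have hval' : ∀ j : Fin (L + 1), x' ((j : ℤ) + 1) = c j := by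
      intro j; rw [hval j, hxc']
    -- the Ψ-windows of x' and x agree at all coordinates ≤ 0 (this is (RIb))
    have hwin : ∀ i : ℤ, i ≤ 0 →
        Ψ (fun k : Fin (2 * L + 1) => x' (i + (k : ℤ) - L))
          = Ψ (fun k : Fin (2 * L + 1) => x (i + (k : ℤ) - L)) := by
      intro i hi
      rcases le_or_gt i (-(L : ℤ)) with hiL | hiL
      · refine congrArg Ψ (funext fun k => ?_)
        exact hagree (i + (k : ℤ) - L) (by have := k.isLt; omega)
      · -- -L < i ≤ 0
        set n' : ℕ := (-i).toNat with hn'def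
        have hn' : n' < L := by omega
        have hin' : i = -(n' : ℤ) := by omega
        have hb := hRIb n' hn' (fun j : Fin (2 * L + n' + 1) => x ((j : ℤ) - L - n'))
          ⟨x, hx, fun j => rfl⟩
        have hmod : (fun j : Fin (2 * L + 1) =>
            if h : (j : ℕ) ≤ L + n' then
              (fun j : Fin (2 * L + n' + 1) => x ((j : ℤ) - L - n'))
                ⟨(j : ℕ), by have := j.isLt; omega⟩
            else
              Ψ (fun k : Fin (2 * L + 1) =>
                (fun j : Fin (2 * L + n' + 1) => x ((j : ℤ) - L - n'))
                  ⟨n' + (k : ℕ), by have := k.isLt; omega⟩)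
                ⟨(j : ℕ) - (L + n') - 1, by have := j.isLt; omega⟩)
            = (fun k : Fin (2 * L + 1) => x' (i + (k : ℤ) - L)) := by
          funext j
          by_cases hcase : (j : ℕ) ≤ L + n'
          · rw [dif_pos hcase]
            show x ((j : ℤ) - L - n') = x' (i + (j : ℤ) - L)
            rw [hagree _ (by omega)]
            congr 1; omega
          · rw [dif_neg hcase]
            have hj0lt : (j : ℕ) - (L + n') - 1 < L + 1 := by have := j.isLt; omega
            have hinner : (fun k : Fin (2 * L + 1) =>
                (fun j : Fin (2 * L + n' + 1) => x ((j : ℤ) - L - n'))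
                  ⟨n' + (k : ℕ), by have := k.isLt; omega⟩)
                = (fun k : Fin (2 * L + 1) => x ((k : ℤ) - L)) := by
              funext k
              show x (((n' + (k : ℕ) : ℕ) : ℤ) - L - n') = x ((k : ℤ) - L)
              congr 1; push_cast; ring
            rw [hinner]
            have h4 := hval ⟨(j : ℕ) - (L + n') - 1, hj0lt⟩
            rw [← h4]
            show x' ((((j : ℕ) - (L + n') - 1 : ℕ) : ℤ) + 1) = x' (i + (j : ℤ) - L)
            congr 1; omega
        rw [← hmod, hb]
        refine congrArg Ψ (funext fun j => ?_)
        show x ((j : ℤ) - L - n') = x (i + (j : ℤ) - L)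
        congr 1; omega
    refine ⟨code x', mem_image_of_mem _ hx', ?_, ?_⟩
    · intro i hi
      show e (x' i, Ψ (fun k : Fin (2 * L + 1) => x' (i + (k : ℤ) - L)))
         = e (x i, Ψ (fun k : Fin (2 * L + 1) => x (i + (k : ℤ) - L)))
      rw [hagree i hi, hwin i hi]
    · intro j
      have hj0 : j = ⟨0, by simp⟩ := Fin.ext (by
        show (j : ℕ) = 0
        have hjl := j.isLt
        simp only [List.length_singleton] at hjl
        omega)
      rw [hj0]
      show e (x' ((0 : ℤ) + 1), Ψ (fun k : Fin (2 * L + 1) => x' ((0 : ℤ) + 1 + (k : ℤ) - L)))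
         = e (c ⟨0, by omega⟩, Ψ v)
      have h1 : x' ((0 : ℤ) + 1) = c ⟨0, by omega⟩ := by
        have := hval' ⟨0, by omega⟩
        simpa using this
      have h2 : (fun k : Fin (2 * L + 1) => x' ((0 : ℤ) + 1 + (k : ℤ) - L)) = v := by
        funext k
        by_cases hk : (k : ℕ) < L
        · have hco : (0 : ℤ) + 1 + (k : ℤ) - L = -(((L - 1 - (k : ℕ) : ℕ)) : ℤ) := by omega
          rw [hco, hagree _ (by omega), hxp (L - 1 - (k : ℕ)) (by omega)]
          simp only [hvdef]
          rw [dif_pos hk]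
        · have hkL : (k : ℕ) - L < L + 1 := by have := k.isLt; omega
          have hco : (0 : ℤ) + 1 + (k : ℤ) - L = (((k : ℕ) - L : ℕ) : ℤ) + 1 := by omega
          rw [hco]
          have h3 := hval' ⟨(k : ℕ) - L, hkL⟩
          rw [h3]
          simp only [hvdef]
          rw [dif_neg hk]
      rw [h1, h2]

/-- Proposition 4.2.  A subshift admits a presentation with property g
(i.e. is topologically conjugate to a subshift with property g) if and only if it has
property RI. -/
theorem stmt11 {A : Type*} [Fintype A] [Nonempty A] [TopologicalSpace A] [DiscreteTopology A]
    (X : Set (ℤ → A)) (hX : IsSubshift X) :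
    (∃ (m : ℕ) (Y : Set (ℤ → Fin m)), IsSubshift Y ∧ Conjugate X Y ∧ PropertyG Y) ↔
      PropertyRI X := by
  constructor
  · rintro ⟨m, Y, hY, hconj, hg⟩
    exact dirB hX hY hconj hg
  · intro h
    exact dirA hX h
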